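/- The sextic form V(x₁,x₂,x₃) = x₁⁴x₂² + x₁²x₂⁴ − 3x₁²x₂²x₃² + x₃⁶ + (1/250)·(x₁² + x₂² + x₃²)³ is not a sum of squares: there exists no finite family of polynomials q₁, …, q_m ∈ ℝ[x₁,x₂,x₃] with V = q₁² + ⋯ + q_m². -/

import Mathlib

open MvPolynomial

noncomputable def E (a b c : ℕ) : Fin 3 →₀ ℕ :=
  Finsupp.single 0 a + Finsupp.single 1 b + Finsupp.single 2 c

lemma E_apply (a b c : ℕ) : E a b c 0 = a ∧ E a b c 1 = b ∧ E a b c 2 = c := by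
  refine ⟨?_, ?_, ?_⟩ <;> simp [E, Finsupp.single_apply]

lemma eq_E (m : Fin 3 →₀ ℕ) : m = E (m 0) (m 1) (m 2) := by
  ext i; fin_cases i <;> simp [E, Finsupp.single_apply]

lemma E_add (a b c d e f : ℕ) : E a b c + E d e f = E (a+d) (b+e) (c+f) := by
  ext i; fin_cases i <;> simp [E, Finsupp.single_apply]

lemma E_eq_iff {a b c d e f : ℕ} : E a b c = E d e f ↔ (a = d ∧ b = e ∧ c = f) := by
  constructor
  · intro h
    refine ⟨?_, ?_, ?_⟩
    · have := congrFun (congrArg (fun g : Fin 3 →₀ ℕ => (g : Fin 3 → ℕ)) h) 0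
      simpa [E, Finsupp.single_apply] using this
    · have := congrFun (congrArg (fun g : Fin 3 →₀ ℕ => (g : Fin 3 → ℕ)) h) 1
      simpa [E, Finsupp.single_apply] using this
    · have := congrFun (congrArg (fun g : Fin 3 →₀ ℕ => (g : Fin 3 → ℕ)) h) 2
      simpa [E, Finsupp.single_apply] using this
  · rintro ⟨rfl, rfl, rfl⟩; rfl

lemma degree_eq_three_sum (m : Fin 3 →₀ ℕ) : m.degree = m 0 + m 1 + m 2 := by
  show (∑ i ∈ m.support, m i) = m 0 + m 1 + m 2
  rw [Finset.sum_subset (Finset.subset_univ _)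
    (fun i _ hi => by simpa using Finsupp.notMem_support_iff.mp hi)]
  exact Fin.sum_univ_three _

lemma degree_E (a b c : ℕ) : (E a b c).degree = a + b + c := by
  rw [degree_eq_three_sum]
  obtain ⟨h0, h1, h2⟩ := E_apply a b c
  rw [h0, h1, h2]

lemma sum_eq_degree (m : Fin 3 →₀ ℕ) : (m.sum fun _ e => e) = m.degree := by
  rfl

lemma monomial_E (a b c : ℕ) (r : ℝ) :
    (monomial (E a b c) r : MvPolynomial (Fin 3) ℝ) = C r * X 0 ^ a * X 1 ^ b * X 2 ^ c := by
  rw [monomial_eq]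
  rw [Finsupp.prod_fintype _ _ (fun i => pow_zero _)]
  rw [Fin.prod_univ_three]
  simp [E, Finsupp.single_apply, mul_assoc]


lemma sos_eq_zero {k : ℕ} {p : Fin k → MvPolynomial (Fin 3) ℝ}
    (h : ∑ i, (p i) ^ 2 = 0) (i : Fin k) : p i = 0 := by
  have hx : ∀ x : Fin 3 → ℝ, eval x (p i) = 0 := by
    intro x
    have h0 : ∑ j, (eval x (p j)) ^ 2 = 0 := by
      have := congrArg (eval x) h
      simpa using this
    have := (Finset.sum_eq_zero_iff_of_nonneg
      (fun j _ => sq_nonneg (eval x (p j)))).mp h0 i (Finset.mem_univ i)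
    exact (pow_eq_zero_iff (two_ne_zero)).mp this
  have := MvPolynomial.funext (p := p i) (q := 0) (fun x => by simpa using hx x)
  simpa using this

lemma hc_sq {q : MvPolynomial (Fin 3) ℝ} {D : ℕ} (hq : q.totalDegree ≤ D) :
    homogeneousComponent (D + D) (q * q) =
      homogeneousComponent D q * homogeneousComponent D q := by
  have hvanish : ∀ (m : Fin 3 →₀ ℕ), D < m.degree → coeff m q = 0 := by
    intro m hm
    apply coeff_eq_zero_of_totalDegree_lt
    have : (∑ i ∈ m.support, m i) = m.degree := rfl
    omega
  apply MvPolynomial.ext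
  intro d
  rw [coeff_homogeneousComponent, coeff_mul, coeff_mul]
  by_cases hd : d.degree = D + D
  · rw [if_pos hd]
    apply Finset.sum_congr rfl
    intro x hx
    rw [Finset.HasAntidiagonal.mem_antidiagonal] at hx
    have hsum : x.1.degree + x.2.degree = D + D := by
      rw [← hd, ← hx]
      rw [degree_eq_three_sum x.1, degree_eq_three_sum x.2, degree_eq_three_sum]
      simp [Finsupp.add_apply]
      ring
    rw [coeff_homogeneousComponent, coeff_homogeneousComponent]
    by_cases h1 : x.1.degree = D
    · have h2 : x.2.degree = D := by omega
      rw [if_pos h1, if_pos h2]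
    · rw [if_neg h1]
      by_cases h2 : x.2.degree = D
      ·
        omega
      · rw [if_neg h2]
        -- one of the degrees exceeds D
        rcases Nat.lt_or_ge D x.1.degree with hgt | hle
        · rw [hvanish x.1 hgt, zero_mul, zero_mul]
        · have : D < x.2.degree := by omega
          rw [hvanish x.2 this, mul_zero, mul_zero]
  · rw [if_neg hd]
    symm
    apply Finset.sum_eq_zero
    intro x hx
    rw [Finset.HasAntidiagonal.mem_antidiagonal] at hx
    have hsum : x.1.degree + x.2.degree = d.degree := by
      rw [← hx]
      rw [degree_eq_three_sum x.1, degree_eq_three_sum x.2, degree_eq_three_sum]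
      simp [Finsupp.add_apply]
      ring
    rw [coeff_homogeneousComponent, coeff_homogeneousComponent]
    by_cases h1 : x.1.degree = D
    · rw [if_pos h1]
      by_cases h2 : x.2.degree = D
      · omega
      · rw [if_neg h2, mul_zero]
    · rw [if_neg h1, zero_mul]

lemma deg_le_three {k : ℕ} {q : Fin k → MvPolynomial (Fin 3) ℝ}
    {V : MvPolynomial (Fin 3) ℝ} (hVq : V = ∑ i, (q i) ^ 2)
    (hdeg : V.totalDegree ≤ 6) : ∀ i, (q i).totalDegree ≤ 3 := by
  by_contra hcon
  push_neg at hcon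
  obtain ⟨i₁, hi₁⟩ := hcon
  set D := Finset.univ.sup (fun i => (q i).totalDegree) with hDdef
  have hDall : ∀ i, (q i).totalDegree ≤ D :=
    fun i => Finset.le_sup (f := fun i => (q i).totalDegree) (Finset.mem_univ i)
  have hD4 : 4 ≤ D := by have := hDall i₁; omega
  have hzero : homogeneousComponent (D + D) V = 0 :=
    homogeneousComponent_eq_zero (φ := V) (n := D + D) (by omega)
  rw [hVq] at hzero
  rw [map_sum] at hzero
  have hsq : ∀ i, homogeneousComponent (D + D) ((q i) ^ 2) =
      (homogeneousComponent D (q i)) ^ 2 := by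
    intro i
    rw [sq, sq]
    exact hc_sq (hDall i)
  rw [Finset.sum_congr rfl (fun i _ => hsq i)] at hzero
  have hall0 : ∀ i, homogeneousComponent D (q i) = 0 := sos_eq_zero hzero
  -- pick i₀ attaining the sup
  have hne : (Finset.univ : Finset (Fin k)).Nonempty := ⟨i₁, Finset.mem_univ i₁⟩
  obtain ⟨i₀, _, hi₀⟩ := Finset.exists_mem_eq_sup Finset.univ hne
    (fun i => (q i).totalDegree)
  have hDi₀ : (q i₀).totalDegree = D := by rw [hDdef]; exact hi₀.symm
  have hq0 : q i₀ ≠ 0 := by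
    intro h0
    rw [h0] at hDi₀
    rw [MvPolynomial.totalDegree_zero] at hDi₀
    omega
  have hsupp : (q i₀).support.Nonempty := by
    exact MvPolynomial.support_nonempty.mpr hq0
  obtain ⟨m, hm, hmax⟩ := Finset.exists_mem_eq_sup _ hsupp
    (fun s : Fin 3 →₀ ℕ => s.sum fun _ e => e)
  have hmdeg : m.degree = D := by
    have h1 : (q i₀).totalDegree = m.sum fun _ e => e := by
      rw [MvPolynomial.totalDegree, hmax]
    have h2 : (m.sum fun _ e => e) = m.degree := rfl
    rw [← h2, ← h1, hDi₀]
  have : coeff m (homogeneousComponent D (q i₀)) = coeff m (q i₀) := by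
    rw [coeff_homogeneousComponent, if_pos hmdeg]
  rw [hall0 i₀] at this
  simp at this
  exact (MvPolynomial.mem_support_iff.mp hm) this.symm

lemma deg3_of_coeff_ne {q : MvPolynomial (Fin 3) ℝ} (hq : q.totalDegree ≤ 3)
    {m : Fin 3 →₀ ℕ} (h : coeff m q ≠ 0) : m 0 + m 1 + m 2 ≤ 3 := by
  by_contra h4
  push_neg at h4
  apply h
  apply coeff_eq_zero_of_totalDegree_lt
  have h2 : (∑ i ∈ m.support, m i) = m.degree := rfl
  rw [h2, degree_eq_three_sum]
  omega

def T3 (g0 g1 g2 : ℕ) : Finset (ℕ × ℕ × ℕ) :=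
  (Finset.range 4 ×ˢ Finset.range 4 ×ˢ Finset.range 4).filter
    (fun t => t.1 + t.2.1 + t.2.2 = 3 ∧ t.1 ≤ g0 ∧ t.2.1 ≤ g1 ∧ t.2.2 ≤ g2)

lemma coeff_mul_cubic {q : MvPolynomial (Fin 3) ℝ} (hq : q.totalDegree ≤ 3)
    (g0 g1 g2 : ℕ) (hg : g0 + g1 + g2 = 6) :
    coeff (E g0 g1 g2) (q * q) =
      ∑ t ∈ T3 g0 g1 g2,
        coeff (E t.1 t.2.1 t.2.2) q * coeff (E (g0 - t.1) (g1 - t.2.1) (g2 - t.2.2)) q := by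
  classical
  rw [coeff_mul]
  apply Finset.sum_bij_ne_zero (i := fun x _ _ => (x.1 0, x.1 1, x.1 2))
  · -- membership
    intro x hx hne
    rw [Finset.HasAntidiagonal.mem_antidiagonal] at hx
    have hv : ∀ j : Fin 3, x.1 j + x.2 j = (E g0 g1 g2) j := by
      intro j; rw [← hx]; simp [Finsupp.add_apply]
    obtain ⟨e0, e1, e2⟩ := E_apply g0 g1 g2
    have hv0 := hv 0; have hv1 := hv 1; have hv2 := hv 2
    rw [e0] at hv0; rw [e1] at hv1; rw [e2] at hv2
    have hc1 : coeff x.1 q ≠ 0 := fun h => hne (by rw [h, zero_mul])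
    have hc2 : coeff x.2 q ≠ 0 := fun h => hne (by rw [h, mul_zero])
    have hd1 := deg3_of_coeff_ne hq hc1
    have hd2 := deg3_of_coeff_ne hq hc2
    simp only [T3, Finset.mem_filter, Finset.mem_product, Finset.mem_range]
    refine ⟨⟨?_, ?_, ?_⟩, ?_, ?_, ?_, ?_⟩ <;> omega
  · -- injectivity
    intro x₁ h₁₁ h₁₂ x₂ h₂₁ h₂₂ heq
    rw [Finset.HasAntidiagonal.mem_antidiagonal] at h₁₁ h₂₁
    have e1 : x₁.1 = x₂.1 := by
      rw [eq_E x₁.1, eq_E x₂.1]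
      have a0 : x₁.1 0 = x₂.1 0 := congrArg Prod.fst heq
      have a1 : x₁.1 1 = x₂.1 1 := congrArg (fun t => t.2.1) heq
      have a2 : x₁.1 2 = x₂.1 2 := congrArg (fun t => t.2.2) heq
      rw [a0, a1, a2]
    have e2 : x₁.2 = x₂.2 := by
      have : x₁.1 + x₁.2 = x₂.1 + x₂.2 := by rw [h₁₁, h₂₁]
      rw [e1] at this
      exact add_left_cancel this
    exact Prod.ext e1 e2
  · -- surjectivity
    intro b hb hgb
    simp only [T3, Finset.mem_filter, Finset.mem_product, Finset.mem_range] at hb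
    obtain ⟨⟨r0, r1, r2⟩, hs, b0, b1, b2⟩ := hb
    refine ⟨(E b.1 b.2.1 b.2.2, E (g0 - b.1) (g1 - b.2.1) (g2 - b.2.2)), ?_, ?_, ?_⟩
    · rw [Finset.HasAntidiagonal.mem_antidiagonal]
      show E b.1 b.2.1 b.2.2 + E (g0 - b.1) (g1 - b.2.1) (g2 - b.2.2) = E g0 g1 g2
      rw [E_add]
      congr 1 <;> omega
    · exact hgb
    · obtain ⟨f0, f1, f2⟩ := E_apply b.1 b.2.1 b.2.2
      show (_, _, _) = b
      rw [f0, f1, f2]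
  · -- values
    intro x h₁ h₂
    rw [Finset.HasAntidiagonal.mem_antidiagonal] at h₁
    have hv : ∀ j : Fin 3, x.1 j + x.2 j = (E g0 g1 g2) j := by
      intro j; rw [← h₁]; simp [Finsupp.add_apply]
    obtain ⟨e0, e1, e2⟩ := E_apply g0 g1 g2
    have hv0 := hv 0; have hv1 := hv 1; have hv2 := hv 2
    rw [e0] at hv0; rw [e1] at hv1; rw [e2] at hv2
    have hx2 : x.2 = E (g0 - x.1 0) (g1 - x.1 1) (g2 - x.1 2) := by
      rw [eq_E x.2]
      congr 1 <;> omega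
    conv_lhs => rw [eq_E x.1, hx2]
set_option maxHeartbeats 1000000 in
/-- The perturbed Motzkin form
`V = x₁⁴x₂² + x₁²x₂⁴ − 3x₁²x₂²x₃² + x₃⁶ + (1/250)(x₁² + x₂² + x₃²)³`
is not a sum of squares of polynomials. -/
theorem perturbed_motzkin_not_sum_of_squares
    (V : MvPolynomial (Fin 3) ℝ)
    (hV : V = X 0 ^ 4 * X 1 ^ 2 + X 0 ^ 2 * X 1 ^ 4
      - 3 * (X 0 ^ 2 * X 1 ^ 2 * X 2 ^ 2) + X 2 ^ 6
      + C (1/250) * (X 0 ^ 2 + X 1 ^ 2 + X 2 ^ 2) ^ 3) :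
    ¬ ∃ (k : ℕ) (q : Fin k → MvPolynomial (Fin 3) ℝ), V = ∑ i : Fin k, (q i) ^ 2 := by
  rintro ⟨k, q, hq⟩
  have hVm : V = monomial (E 4 2 0) 1 + monomial (E 2 4 0) 1 + monomial (E 2 2 2) (-3)
      + monomial (E 0 0 6) 1
      + C (1/250) * (monomial (E 6 0 0) 1 + monomial (E 0 6 0) 1 + monomial (E 0 0 6) 1
        + monomial (E 4 2 0) 3 + monomial (E 2 4 0) 3 + monomial (E 4 0 2) 3
        + monomial (E 0 4 2) 3 + monomial (E 2 0 4) 3 + monomial (E 0 2 4) 3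
        + monomial (E 2 2 2) 6) := by
    rw [hV]
    simp only [monomial_E, map_neg, map_ofNat, map_one]
    ring
  have hm6 : ∀ (a b c : ℕ) (r : ℝ), a + b + c ≤ 6 →
      (monomial (E a b c) r : MvPolynomial (Fin 3) ℝ).totalDegree ≤ 6 := by
    intro a b c r h
    refine (totalDegree_monomial_le _ _).trans ?_
    have h2 : ((E a b c).sum fun _ ↦ id) = (E a b c).degree := rfl
    rw [h2, degree_E]
    exact h
  have hmax : ∀ p r : MvPolynomial (Fin 3) ℝ, p.totalDegree ≤ 6 → r.totalDegree ≤ 6 →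
      (p + r).totalDegree ≤ 6 := fun p r hp hr => (totalDegree_add p r).trans (max_le hp hr)
  have hdeg : V.totalDegree ≤ 6 := by
    rw [hVm]
    refine hmax _ _ (hmax _ _ (hmax _ _ (hmax _ _ (hm6 _ _ _ _ (by norm_num))
      (hm6 _ _ _ _ (by norm_num))) (hm6 _ _ _ _ (by norm_num))) (hm6 _ _ _ _ (by norm_num))) ?_
    refine (totalDegree_mul _ _).trans ?_
    have hC : (C (1/250 : ℝ) : MvPolynomial (Fin 3) ℝ).totalDegree = 0 := totalDegree_C _
    have hS : (monomial (E 6 0 0) 1 + monomial (E 0 6 0) 1 + monomial (E 0 0 6) 1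
        + monomial (E 4 2 0) 3 + monomial (E 2 4 0) 3 + monomial (E 4 0 2) 3
        + monomial (E 0 4 2) 3 + monomial (E 2 0 4) 3 + monomial (E 0 2 4) 3
        + monomial (E 2 2 2) (6:ℝ)).totalDegree ≤ 6 := by
      refine hmax _ _ (hmax _ _ (hmax _ _ (hmax _ _ (hmax _ _ (hmax _ _ (hmax _ _ (hmax _ _
        (hmax _ _ (hm6 _ _ _ _ (by norm_num)) (hm6 _ _ _ _ (by norm_num)))
        (hm6 _ _ _ _ (by norm_num))) (hm6 _ _ _ _ (by norm_num))) (hm6 _ _ _ _ (by norm_num)))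
        (hm6 _ _ _ _ (by norm_num))) (hm6 _ _ _ _ (by norm_num))) (hm6 _ _ _ _ (by norm_num)))
        (hm6 _ _ _ _ (by norm_num))) (hm6 _ _ _ _ (by norm_num))
    omega
  have hq3 := deg_le_three hq hdeg
  have hV600 : coeff (E 6 0 0) V = 1/250 := by
    rw [hVm]
    simp only [coeff_add, coeff_C_mul, coeff_monomial, E_eq_iff]
    norm_num
  have hV060 : coeff (E 0 6 0) V = 1/250 := by
    rw [hVm]
    simp only [coeff_add, coeff_C_mul, coeff_monomial, E_eq_iff]
    norm_num
  have hV006 : coeff (E 0 0 6) V = 251/250 := by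
    rw [hVm]
    simp only [coeff_add, coeff_C_mul, coeff_monomial, E_eq_iff]
    norm_num
  have hV420 : coeff (E 4 2 0) V = 253/250 := by
    rw [hVm]
    simp only [coeff_add, coeff_C_mul, coeff_monomial, E_eq_iff]
    norm_num
  have hV240 : coeff (E 2 4 0) V = 253/250 := by
    rw [hVm]
    simp only [coeff_add, coeff_C_mul, coeff_monomial, E_eq_iff]
    norm_num
  have hV402 : coeff (E 4 0 2) V = 3/250 := by
    rw [hVm]
    simp only [coeff_add, coeff_C_mul, coeff_monomial, E_eq_iff]
    norm_num
  have hV042 : coeff (E 0 4 2) V = 3/250 := by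
    rw [hVm]
    simp only [coeff_add, coeff_C_mul, coeff_monomial, E_eq_iff]
    norm_num
  have hV204 : coeff (E 2 0 4) V = 3/250 := by
    rw [hVm]
    simp only [coeff_add, coeff_C_mul, coeff_monomial, E_eq_iff]
    norm_num
  have hV024 : coeff (E 0 2 4) V = 3/250 := by
    rw [hVm]
    simp only [coeff_add, coeff_C_mul, coeff_monomial, E_eq_iff]
    norm_num
  have hV222 : coeff (E 2 2 2) V = -372/125 := by
    rw [hVm]
    simp only [coeff_add, coeff_C_mul, coeff_monomial, E_eq_iff]
    norm_num
  have hsplit : ∀ g : Fin 3 →₀ ℕ, coeff g V = ∑ i, coeff g (q i * q i) := by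
    intro g
    rw [hq, coeff_sum]
    exact Finset.sum_congr rfl fun i _ => by rw [sq]
  have hQ : ∀ i, (0:ℝ) ≤ 
      (28) * coeff (E 6 0 0) (q i * q i)
      + (28) * coeff (E 0 6 0) (q i * q i)
      + (1) * coeff (E 0 0 6) (q i * q i)
      + (4/5) * coeff (E 4 2 0) (q i * q i)
      + (4/5) * coeff (E 2 4 0) (q i * q i)
      + (3) * coeff (E 4 0 2) (q i * q i)
      + (3) * coeff (E 0 4 2) (q i * q i)
      + (7/5) * coeff (E 2 0 4) (q i * q i)
      + (7/5) * coeff (E 0 2 4) (q i * q i)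
      + (1) * coeff (E 2 2 2) (q i * q i) := by
    intro i
    have e600 : coeff (E 6 0 0) (q i * q i) = coeff (E 3 0 0) (q i) * coeff (E 3 0 0) (q i) := by
      rw [coeff_mul_cubic (hq3 i) 6 0 0 (by norm_num),
        show T3 6 0 0 = ({(3,0,0)} : Finset (ℕ×ℕ×ℕ)) from by decide
        , Finset.sum_singleton]
      norm_num
    have e060 : coeff (E 0 6 0) (q i * q i) = coeff (E 0 3 0) (q i) * coeff (E 0 3 0) (q i) := by
      rw [coeff_mul_cubic (hq3 i) 0 6 0 (by norm_num),
        show T3 0 6 0 = ({(0,3,0)} : Finset (ℕ×ℕ×ℕ)) from by decide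
        , Finset.sum_singleton]
      norm_num
    have e006 : coeff (E 0 0 6) (q i * q i) = coeff (E 0 0 3) (q i) * coeff (E 0 0 3) (q i) := by
      rw [coeff_mul_cubic (hq3 i) 0 0 6 (by norm_num),
        show T3 0 0 6 = ({(0,0,3)} : Finset (ℕ×ℕ×ℕ)) from by decide
        , Finset.sum_singleton]
      norm_num
    have e420 : coeff (E 4 2 0) (q i * q i) = coeff (E 1 2 0) (q i) * coeff (E 3 0 0) (q i) + coeff (E 2 1 0) (q i) * coeff (E 2 1 0) (q i) + coeff (E 3 0 0) (q i) * coeff (E 1 2 0) (q i) := by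
      rw [coeff_mul_cubic (hq3 i) 4 2 0 (by norm_num),
        show T3 4 2 0 = ({(1,2,0), (2,1,0), (3,0,0)} : Finset (ℕ×ℕ×ℕ)) from by decide
        , Finset.sum_insert (by decide), Finset.sum_insert (by decide), Finset.sum_singleton]
      norm_num
      try ring
    have e240 : coeff (E 2 4 0) (q i * q i) = coeff (E 0 3 0) (q i) * coeff (E 2 1 0) (q i) + coeff (E 1 2 0) (q i) * coeff (E 1 2 0) (q i) + coeff (E 2 1 0) (q i) * coeff (E 0 3 0) (q i) := by
      rw [coeff_mul_cubic (hq3 i) 2 4 0 (by norm_num),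
        show T3 2 4 0 = ({(0,3,0), (1,2,0), (2,1,0)} : Finset (ℕ×ℕ×ℕ)) from by decide
        , Finset.sum_insert (by decide), Finset.sum_insert (by decide), Finset.sum_singleton]
      norm_num
      try ring
    have e402 : coeff (E 4 0 2) (q i * q i) = coeff (E 1 0 2) (q i) * coeff (E 3 0 0) (q i) + coeff (E 2 0 1) (q i) * coeff (E 2 0 1) (q i) + coeff (E 3 0 0) (q i) * coeff (E 1 0 2) (q i) := by
      rw [coeff_mul_cubic (hq3 i) 4 0 2 (by norm_num),
        show T3 4 0 2 = ({(1,0,2), (2,0,1), (3,0,0)} : Finset (ℕ×ℕ×ℕ)) from by decide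
        , Finset.sum_insert (by decide), Finset.sum_insert (by decide), Finset.sum_singleton]
      norm_num
      try ring
    have e042 : coeff (E 0 4 2) (q i * q i) = coeff (E 0 1 2) (q i) * coeff (E 0 3 0) (q i) + coeff (E 0 2 1) (q i) * coeff (E 0 2 1) (q i) + coeff (E 0 3 0) (q i) * coeff (E 0 1 2) (q i) := by
      rw [coeff_mul_cubic (hq3 i) 0 4 2 (by norm_num),
        show T3 0 4 2 = ({(0,1,2), (0,2,1), (0,3,0)} : Finset (ℕ×ℕ×ℕ)) from by decide
        , Finset.sum_insert (by decide), Finset.sum_insert (by decide), Finset.sum_singleton]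
      norm_num
      try ring
    have e204 : coeff (E 2 0 4) (q i * q i) = coeff (E 0 0 3) (q i) * coeff (E 2 0 1) (q i) + coeff (E 1 0 2) (q i) * coeff (E 1 0 2) (q i) + coeff (E 2 0 1) (q i) * coeff (E 0 0 3) (q i) := by
      rw [coeff_mul_cubic (hq3 i) 2 0 4 (by norm_num),
        show T3 2 0 4 = ({(0,0,3), (1,0,2), (2,0,1)} : Finset (ℕ×ℕ×ℕ)) from by decide
        , Finset.sum_insert (by decide), Finset.sum_insert (by decide), Finset.sum_singleton]
      norm_num
      try ring
    have e024 : coeff (E 0 2 4) (q i * q i) = coeff (E 0 0 3) (q i) * coeff (E 0 2 1) (q i) + coeff (E 0 1 2) (q i) * coeff (E 0 1 2) (q i) + coeff (E 0 2 1) (q i) * coeff (E 0 0 3) (q i) := by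
      rw [coeff_mul_cubic (hq3 i) 0 2 4 (by norm_num),
        show T3 0 2 4 = ({(0,0,3), (0,1,2), (0,2,1)} : Finset (ℕ×ℕ×ℕ)) from by decide
        , Finset.sum_insert (by decide), Finset.sum_insert (by decide), Finset.sum_singleton]
      norm_num
      try ring
    have e222 : coeff (E 2 2 2) (q i * q i) = coeff (E 0 1 2) (q i) * coeff (E 2 1 0) (q i) + coeff (E 0 2 1) (q i) * coeff (E 2 0 1) (q i) + coeff (E 1 0 2) (q i) * coeff (E 1 2 0) (q i) + coeff (E 1 1 1) (q i) * coeff (E 1 1 1) (q i) + coeff (E 1 2 0) (q i) * coeff (E 1 0 2) (q i) + coeff (E 2 0 1) (q i) * coeff (E 0 2 1) (q i) + coeff (E 2 1 0) (q i) * coeff (E 0 1 2) (q i) := by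
      rw [coeff_mul_cubic (hq3 i) 2 2 2 (by norm_num),
        show T3 2 2 2 = ({(0,1,2), (0,2,1), (1,0,2), (1,1,1), (1,2,0), (2,0,1), (2,1,0)} : Finset (ℕ×ℕ×ℕ)) from by decide
        , Finset.sum_insert (by decide), Finset.sum_insert (by decide), Finset.sum_insert (by decide), Finset.sum_insert (by decide), Finset.sum_insert (by decide), Finset.sum_insert (by decide), Finset.sum_singleton]
      norm_num
      try ring
    rw [e600, e060, e006, e420, e240, e402, e042, e204, e024, e222]
    set c003 := coeff (E 0 0 3) (q i) with hc003
    set c012 := coeff (E 0 1 2) (q i) with hc012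
    set c021 := coeff (E 0 2 1) (q i) with hc021
    set c030 := coeff (E 0 3 0) (q i) with hc030
    set c102 := coeff (E 1 0 2) (q i) with hc102
    set c111 := coeff (E 1 1 1) (q i) with hc111
    set c120 := coeff (E 1 2 0) (q i) with hc120
    set c201 := coeff (E 2 0 1) (q i) with hc201
    set c210 := coeff (E 2 1 0) (q i) with hc210
    set c300 := coeff (E 3 0 0) (q i) with hc300
    have hid : (28:ℝ) * (c300*c300) + 28 * (c030*c030) + 1 * (c003*c003)
        + (4/5) * (c120*c300 + c210*c210 + c300*c120)
        + (4/5) * (c030*c210 + c120*c120 + c210*c030)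
        + 3 * (c102*c300 + c201*c201 + c300*c102)
        + 3 * (c012*c030 + c021*c021 + c030*c012)
        + (7/5) * (c003*c201 + c102*c102 + c201*c003)
        + (7/5) * (c003*c021 + c012*c012 + c021*c003)
        + 1 * (c012*c210 + c021*c201 + c102*c120 + c111*c111 + c120*c102 + c201*c021 + c210*c012)
      = 28*(c300 + (1/35)*c120 + (3/28)*c102)^2 + (136/175)*(c120 + (20/17)*c102)^2
        + (1/340)*c102^2
        + 28*(c030 + (1/35)*c210 + (3/28)*c012)^2 + (136/175)*(c210 + (20/17)*c012)^2
        + (1/340)*c012^2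
        + (c003 + (7/5)*c201 + (7/5)*c021)^2 + (26/25)*(c201 - (12/13)*c021)^2
        + (2/13)*c021^2 + c111^2 := by ring
    rw [hid]
    positivity
  have hneg : (-29/1250 : ℝ) = ∑ i, (
      (28) * coeff (E 6 0 0) (q i * q i)
      + (28) * coeff (E 0 6 0) (q i * q i)
      + (1) * coeff (E 0 0 6) (q i * q i)
      + (4/5) * coeff (E 4 2 0) (q i * q i)
      + (4/5) * coeff (E 2 4 0) (q i * q i)
      + (3) * coeff (E 4 0 2) (q i * q i)
      + (3) * coeff (E 0 4 2) (q i * q i)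
      + (7/5) * coeff (E 2 0 4) (q i * q i)
      + (7/5) * coeff (E 0 2 4) (q i * q i)
      + (1) * coeff (E 2 2 2) (q i * q i)) := by
    have hL : (-29/1250 : ℝ) = (28) * coeff (E 6 0 0) V
      + (28) * coeff (E 0 6 0) V
      + (1) * coeff (E 0 0 6) V
      + (4/5) * coeff (E 4 2 0) V
      + (4/5) * coeff (E 2 4 0) V
      + (3) * coeff (E 4 0 2) V
      + (3) * coeff (E 0 4 2) V
      + (7/5) * coeff (E 2 0 4) V
      + (7/5) * coeff (E 0 2 4) V
      + (1) * coeff (E 2 2 2) V := by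
      rw [hV600, hV060, hV006, hV420, hV240, hV402, hV042, hV204, hV024, hV222]
      norm_num
    rw [hL]
    rw [hsplit (E 6 0 0), hsplit (E 0 6 0), hsplit (E 0 0 6), hsplit (E 4 2 0), hsplit (E 2 4 0), hsplit (E 4 0 2), hsplit (E 0 4 2), hsplit (E 2 0 4), hsplit (E 0 2 4), hsplit (E 2 2 2)]
    rw [Finset.mul_sum, Finset.mul_sum, Finset.mul_sum, Finset.mul_sum, Finset.mul_sum, Finset.mul_sum, Finset.mul_sum, Finset.mul_sum, Finset.mul_sum, Finset.mul_sum]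
    rw [← Finset.sum_add_distrib, ← Finset.sum_add_distrib, ← Finset.sum_add_distrib, ← Finset.sum_add_distrib, ← Finset.sum_add_distrib, ← Finset.sum_add_distrib, ← Finset.sum_add_distrib, ← Finset.sum_add_distrib, ← Finset.sum_add_distrib]
  have hpos : (0:ℝ) ≤ ∑ i, (
      (28) * coeff (E 6 0 0) (q i * q i)
      + (28) * coeff (E 0 6 0) (q i * q i)
      + (1) * coeff (E 0 0 6) (q i * q i)
      + (4/5) * coeff (E 4 2 0) (q i * q i)
      + (4/5) * coeff (E 2 4 0) (q i * q i)
      + (3) * coeff (E 4 0 2) (q i * q i)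
      + (3) * coeff (E 0 4 2) (q i * q i)
      + (7/5) * coeff (E 2 0 4) (q i * q i)
      + (7/5) * coeff (E 0 2 4) (q i * q i)
      + (1) * coeff (E 2 2 2) (q i * q i)) := Finset.sum_nonneg fun i _ => hQ i
  rw [← hneg] at hpos
  norm_num at hpos
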